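/- Let ι be a finite index type, b : ι → ℕ a block-index function, and let B, L : Matrix ι ι ℝ be such that B is strictly lower block triangular with respect to b (i.e., B i j = 0 whenever b i ≤ b j) and L is lower block triangular with respect to b (i.e., L i j = 0 whenever b i < b j). Then the matrix I − B·L is invertible, and the matrix K = L·(I − B·L)⁻¹ is lower block triangular with respect to b (i.e., K i j = 0 whenever b i < b j). -/

import Mathlib

open Matrix

/-- If `B` is strictly lower block triangular and `L` is lower block triangular, then
`I − B·L` is invertible and `K = L·(I − B·L)⁻¹` is lower block triangular. -/
theorem lower_block_triangular_feedback_gain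
    {ι : Type*} [Fintype ι] [DecidableEq ι] (b : ι → ℕ)
    (B L : Matrix ι ι ℝ)
    (hB : ∀ i j, b i ≤ b j → B i j = 0)
    (hL : ∀ i j, b i < b j → L i j = 0) :
    IsUnit (1 - B * L)
      ∧ ∀ i j, b i < b j → (L * (1 - B * L)⁻¹) i j = 0 := by
  set A := B * L with hA_def
  have hA : ∀ i j, b i ≤ b j → A i j = 0 := by
    intro i j hij
    rw [hA_def, Matrix.mul_apply]
    apply Finset.sum_eq_zero
    intro m _
    by_cases h : b i ≤ b m
    · rw [hB i m h, zero_mul]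
    · rw [hL m j (lt_of_lt_of_le (not_le.mp h) hij), mul_zero]
  have hpow : ∀ k i j, b i < b j + k → (A ^ k) i j = 0 := by
    intro k
    induction k with
    | zero =>
      intro i j h
      have : i ≠ j := by rintro rfl; omega
      simp [Matrix.one_apply_ne this]
    | succ k ih =>
      intro i j h
      rw [pow_succ, Matrix.mul_apply]
      apply Finset.sum_eq_zero
      intro m _
      by_cases hm : b i < b m + k
      · rw [ih i m hm, zero_mul]
      · rw [hA m j (by omega), mul_zero]
  set n := Finset.univ.sup b + 1 with hn_def
  have hnil : A ^ n = 0 := by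
    ext i j
    rw [Matrix.zero_apply]
    apply hpow
    have : b i ≤ Finset.univ.sup b := Finset.le_sup (Finset.mem_univ i)
    omega
  set S := ∑ k ∈ Finset.range n, A ^ k with hS_def
  have hmul : (1 - A) * S = 1 := by
    have h1 : (A - 1) * S = A ^ n - 1 := mul_geom_sum A n
    rw [← neg_sub A 1, neg_mul, h1, hnil, zero_sub, neg_neg]
  refine ⟨(Matrix.isUnit_iff_isUnit_det _).mpr (Matrix.isUnit_det_of_right_inverse hmul), ?_⟩
  intro i j hij
  rw [Matrix.inv_eq_right_inv hmul, Finset.mul_sum, Matrix.sum_apply]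
  apply Finset.sum_eq_zero
  intro k _
  rw [Matrix.mul_apply]
  apply Finset.sum_eq_zero
  intro m _
  by_cases h : b i < b m
  · rw [hL i m h, zero_mul]
  · rw [hpow k m j (by omega), mul_zero]
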